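/- Fix λ ∈ [0,1) and define G_λ : ℝ² → ℝ by G_λ(x₁,x₂) = (√(1−λ²)/(4π)) exp(−((1+λ)x₁² + (1−λ)x₂²)/4). Then G_λ satisfies the linear equation (L_⊥ + λM)G_λ = 0 pointwise on ℝ², where L_⊥ = Δ + (1/2)(x₁∂₁ + x₂∂₂) + 1 and M = (1/2)(x₁∂₁ − x₂∂₂); moreover ∫_{ℝ²} G_λ(x) dx = 1. -/

import Mathlib

open Real MeasureTheory

noncomputable section

/-- Partial derivative in the first variable of a function on `ℝ²`. -/
def q1 (f : ℝ × ℝ → ℝ) (x : ℝ × ℝ) : ℝ := deriv (fun s => f (s, x.2)) x.1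

/-- Partial derivative in the second variable of a function on `ℝ²`. -/
def q2 (f : ℝ × ℝ → ℝ) (x : ℝ × ℝ) : ℝ := deriv (fun s => f (x.1, s)) x.2

/-- Laplacian on `ℝ²`. -/
def lap2 (f : ℝ × ℝ → ℝ) (x : ℝ × ℝ) : ℝ := q1 (q1 f) x + q2 (q2 f) x

/-- The operator `L_⊥ = Δ + (1/2) x_⊥·∇ + 1`. -/
def Lperp (f : ℝ × ℝ → ℝ) (x : ℝ × ℝ) : ℝ :=
  lap2 f x + (1 / 2) * (x.1 * q1 f x + x.2 * q2 f x) + f x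

/-- The operator `M = (1/2)(x₁∂₁ − x₂∂₂)`. -/
def Mop (f : ℝ × ℝ → ℝ) (x : ℝ × ℝ) : ℝ :=
  (1 / 2) * (x.1 * q1 f x - x.2 * q2 f x)

lemma gd (c a k s : ℝ) :
    HasDerivAt (fun t : ℝ => c * Real.exp (-(a * t ^ 2 + k) / 4))
      (c * Real.exp (-(a * s ^ 2 + k) / 4) * (-(a * s) / 2)) s := by
  have h1 : HasDerivAt (fun t : ℝ => -(a * t ^ 2 + k) / 4) (-(a * s) / 2) s := by
    have h := (((hasDerivAt_pow 2 s).const_mul a).add_const k).neg.div_const 4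
    refine h.congr_deriv ?_
    push_cast
    ring
  simpa [mul_assoc] using h1.exp.const_mul c

lemma gd2 (c b k s : ℝ) :
    HasDerivAt (fun t : ℝ => c * Real.exp (-(k + b * t ^ 2) / 4))
      (c * Real.exp (-(k + b * s ^ 2) / 4) * (-(b * s) / 2)) s := by
  have h1 : HasDerivAt (fun t : ℝ => -(k + b * t ^ 2) / 4) (-(b * s) / 2) s := by
    have h := ((((hasDerivAt_pow 2 s).const_mul b).const_add k).neg).div_const 4
    refine h.congr_deriv ?_
    push_cast
    ring
  simpa [mul_assoc] using h1.exp.const_mul c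

lemma gdm (c a k m s : ℝ) :
    HasDerivAt (fun t : ℝ => (m * t) * (c * Real.exp (-(a * t ^ 2 + k) / 4)))
      (m * (c * Real.exp (-(a * s ^ 2 + k) / 4)) +
        (m * s) * (c * Real.exp (-(a * s ^ 2 + k) / 4) * (-(a * s) / 2))) s := by
  have hl : HasDerivAt (fun t : ℝ => m * t) m s := by
    simpa using (hasDerivAt_id s).const_mul m
  exact hl.mul (gd c a k s)

lemma gdm2 (c b k m s : ℝ) :
    HasDerivAt (fun t : ℝ => (m * t) * (c * Real.exp (-(k + b * t ^ 2) / 4)))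
      (m * (c * Real.exp (-(k + b * s ^ 2) / 4)) +
        (m * s) * (c * Real.exp (-(k + b * s ^ 2) / 4) * (-(b * s) / 2))) s := by
  have hl : HasDerivAt (fun t : ℝ => m * t) m s := by
    simpa using (hasDerivAt_id s).const_mul m
  exact hl.mul (gd2 c b k s)

/-- The Gaussian profile `G_λ` satisfies `(L_⊥ + λ M) G_λ = 0` pointwise on `ℝ²`,
and has total integral `1`. -/
theorem Glambda_kernel_and_mass (lam : ℝ) (h0 : 0 ≤ lam) (h1 : lam < 1)
    (G : ℝ × ℝ → ℝ)
    (hG : G = fun x =>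
      Real.sqrt (1 - lam ^ 2) / (4 * π) *
        Real.exp (-((1 + lam) * x.1 ^ 2 + (1 - lam) * x.2 ^ 2) / 4)) :
    (∀ x : ℝ × ℝ, Lperp G x + lam * Mop G x = 0) ∧
    (∫ x : ℝ × ℝ, G x) = 1 := by
  set C : ℝ := Real.sqrt (1 - lam ^ 2) / (4 * π) with hC
  have hap : (0:ℝ) < 1 + lam := by linarith
  have hbp : (0:ℝ) < 1 - lam := by linarith
  -- first partial derivatives
  have hq1 : q1 G = fun y : ℝ × ℝ =>
      ((-(1 + lam) / 2) * y.1) *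
        (C * Real.exp (-((1 + lam) * y.1 ^ 2 + (1 - lam) * y.2 ^ 2) / 4)) := by
    funext y
    simp only [q1, hG]
    rw [(gd C (1 + lam) ((1 - lam) * y.2 ^ 2) y.1).deriv]
    ring
  have hq2 : q2 G = fun y : ℝ × ℝ =>
      ((-(1 - lam) / 2) * y.2) *
        (C * Real.exp (-((1 + lam) * y.1 ^ 2 + (1 - lam) * y.2 ^ 2) / 4)) := by
    funext y
    simp only [q2, hG]
    rw [(gd2 C (1 - lam) ((1 + lam) * y.1 ^ 2) y.2).deriv]
    ring
  have hq11 : ∀ x : ℝ × ℝ, q1 (q1 G) x =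
      (-(1 + lam) / 2) *
          (C * Real.exp (-((1 + lam) * x.1 ^ 2 + (1 - lam) * x.2 ^ 2) / 4)) +
        ((-(1 + lam) / 2) * x.1) *
          (C * Real.exp (-((1 + lam) * x.1 ^ 2 + (1 - lam) * x.2 ^ 2) / 4) *
            (-((1 + lam) * x.1) / 2)) := by
    intro x
    have hx : q1 (q1 G) x = deriv (fun s => q1 G (s, x.2)) x.1 := rfl
    rw [hx, hq1]
    exact (gdm C (1 + lam) ((1 - lam) * x.2 ^ 2) (-(1 + lam) / 2) x.1).deriv
  have hq22 : ∀ x : ℝ × ℝ, q2 (q2 G) x =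
      (-(1 - lam) / 2) *
          (C * Real.exp (-((1 + lam) * x.1 ^ 2 + (1 - lam) * x.2 ^ 2) / 4)) +
        ((-(1 - lam) / 2) * x.2) *
          (C * Real.exp (-((1 + lam) * x.1 ^ 2 + (1 - lam) * x.2 ^ 2) / 4) *
            (-((1 - lam) * x.2) / 2)) := by
    intro x
    have hx : q2 (q2 G) x = deriv (fun s => q2 G (x.1, s)) x.2 := rfl
    rw [hx, hq2]
    exact (gdm2 C (1 - lam) ((1 + lam) * x.1 ^ 2) (-(1 - lam) / 2) x.2).deriv
  have hq1p : ∀ x : ℝ × ℝ, q1 G x =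
      ((-(1 + lam) / 2) * x.1) *
        (C * Real.exp (-((1 + lam) * x.1 ^ 2 + (1 - lam) * x.2 ^ 2) / 4)) := by
    intro x; rw [hq1]
  have hq2p : ∀ x : ℝ × ℝ, q2 G x =
      ((-(1 - lam) / 2) * x.2) *
        (C * Real.exp (-((1 + lam) * x.1 ^ 2 + (1 - lam) * x.2 ^ 2) / 4)) := by
    intro x; rw [hq2]
  have hGp : ∀ x : ℝ × ℝ, G x =
      C * Real.exp (-((1 + lam) * x.1 ^ 2 + (1 - lam) * x.2 ^ 2) / 4) := by
    intro x; rw [hG]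
  constructor
  · intro x
    simp only [Lperp, lap2, Mop]
    rw [hq11 x, hq22 x, hq1p x, hq2p x, hGp x]
    ring
  · -- integral
    rw [hG]
    have hsplit : (fun x : ℝ × ℝ =>
        C * Real.exp (-((1 + lam) * x.1 ^ 2 + (1 - lam) * x.2 ^ 2) / 4)) =
        fun x : ℝ × ℝ =>
          (C * Real.exp (-((1 + lam) / 4) * x.1 ^ 2)) *
            Real.exp (-((1 - lam) / 4) * x.2 ^ 2) := by
      funext x
      rw [mul_assoc, ← Real.exp_add]
      congr 2
      ring
    rw [hsplit, Measure.volume_eq_prod ℝ ℝ,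
      integral_prod_mul (f := fun s : ℝ => C * Real.exp (-((1 + lam) / 4) * s ^ 2))
        (g := fun s : ℝ => Real.exp (-((1 - lam) / 4) * s ^ 2))]
    rw [integral_const_mul, integral_gaussian, integral_gaussian]
    rw [hC]
    have h2 : (1:ℝ) - lam ^ 2 = (1 + lam) * (1 - lam) := by ring
    rw [h2, mul_assoc, ← Real.sqrt_mul (by positivity : (0:ℝ) ≤ π / ((1 + lam) / 4)),
      div_mul_eq_mul_div, ← Real.sqrt_mul (by positivity : (0:ℝ) ≤ (1 + lam) * (1 - lam))]
    have h3 : (1 + lam) * (1 - lam) * (π / ((1 + lam) / 4) * (π / ((1 - lam) / 4))) =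
        (4 * π) ^ 2 := by
      field_simp
    rw [h3, Real.sqrt_sq (by positivity : (0:ℝ) ≤ 4 * π)]
    field_simp
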